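/- arXiv:2503.20775 — 2 statements merged into one kernel-verified Lean document; each statement's English description precedes it below -/
import Mathlib

section
/- The map μ : ℝ⁴ → ℝ³ sending (q_x, p_x, q_y, p_y) to (τ₁, τ₂, τ₃) = (q_x q_y + p_x p_y, ½(p_x² + q_x² − p_y² − q_y²), q_x p_y − q_y p_x) maps the level set H = E (with E > 0) onto the sphere of radius E in ℝ³. -/
/-- 2D harmonic oscillator Hamiltonian; coordinates are `x = (qx, px, qy, py)`. -/
noncomputable def ham (x : ℝ × ℝ × ℝ × ℝ) : ℝ :=
  (x.2.1 ^ 2 + x.2.2.2 ^ 2 + x.1 ^ 2 + x.2.2.1 ^ 2) / 2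

/-- The map `μ = (τ₁, τ₂, τ₃) : ℝ⁴ → ℝ³`. -/
noncomputable def hopfMap (x : ℝ × ℝ × ℝ × ℝ) : ℝ × ℝ × ℝ :=
  (x.1 * x.2.2.1 + x.2.1 * x.2.2.2,
   (x.2.1 ^ 2 + x.1 ^ 2 - x.2.2.2 ^ 2 - x.2.2.1 ^ 2) / 2,
   x.1 * x.2.2.2 - x.2.2.1 * x.2.1)

/-- `μ` maps the level set `H = E` (E > 0) onto the sphere of radius `E` in ℝ³. -/
theorem hopfMap_image_level_set (E : ℝ) (hE : 0 < E) :
    hopfMap '' {x : ℝ × ℝ × ℝ × ℝ | ham x = E}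
      = {v : ℝ × ℝ × ℝ | v.1 ^ 2 + v.2.1 ^ 2 + v.2.2 ^ 2 = E ^ 2} := by
  ext ⟨a, b, c⟩
  simp only [Set.mem_image, Set.mem_setOf_eq]
  constructor
  · rintro ⟨⟨qx, px, qy, py⟩, hx, heq⟩
    simp only [ham] at hx
    simp only [hopfMap, Prod.mk.injEq] at heq
    obtain ⟨h1, h2, h3⟩ := heq
    rw [← h1, ← h2, ← h3, ← hx]; ring
  · intro hv
    rcases eq_or_lt_of_le (show -E ≤ b by nlinarith) with hb | hb
    · -- b = -E, so a = c = 0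
      have ha : a = 0 := by nlinarith
      have hc : c = 0 := by nlinarith
      refine ⟨(0, 0, Real.sqrt (2 * E), 0), ?_, ?_⟩
      · simp only [ham]
        rw [Real.sq_sqrt (by linarith)]
        ring
      · simp only [hopfMap]
        rw [Real.sq_sqrt (by linarith)]
        simp [ha, hc, ← hb]
        ring
    · -- E + b > 0
      have hEb : 0 < E + b := by linarith
      set s := Real.sqrt (E + b) with hs
      have hs2 : s ^ 2 = E + b := Real.sq_sqrt hEb.le
      have hsne : s ≠ 0 := by positivity
      refine ⟨(s, 0, a / s, c / s), ?_, ?_⟩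
      · simp only [ham]
        field_simp
        nlinarith [hv, hs2]
      · simp only [hopfMap]
        refine Prod.ext ?_ (Prod.ext ?_ ?_)
        · field_simp
          ring
        · field_simp
          nlinarith [hv, hs2]
        · field_simp
          ring
end

section
/- Two points (q_x, p_x, q_y, p_y) and (q_x', p_x', q_y', p_y') on the level set H = E (E > 0) have the same image under the map (τ₁, τ₂, τ₃) if and only if they lie in the same orbit of the S¹-action Φ_t(q, p) = (q cos t − p sin t, p cos t + q sin t) acting diagonally on (q_x,p_x) and (q_y,p_y). -/
/-- The `S¹` action `Φ_t(q,p) = (q cos t − p sin t, p cos t + q sin t)`, acting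
diagonally on `(qx, px)` and `(qy, py)`. -/
noncomputable def Phi (t : ℝ) (x : ℝ × ℝ × ℝ × ℝ) : ℝ × ℝ × ℝ × ℝ :=
  (x.1 * Real.cos t - x.2.1 * Real.sin t,
   x.2.1 * Real.cos t + x.1 * Real.sin t,
   x.2.2.1 * Real.cos t - x.2.2.2 * Real.sin t,
   x.2.2.2 * Real.cos t + x.2.2.1 * Real.sin t)

/-- Any point on the unit circle is `(cos t, sin t)` for some `t`. -/
lemma exists_angle (c s : ℝ) (h : c ^ 2 + s ^ 2 = 1) :
    ∃ t : ℝ, Real.cos t = c ∧ Real.sin t = s := by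
  set u : ℂ := ⟨c, s⟩ with hu
  have hns : Complex.normSq u = 1 := by
    simp only [Complex.normSq_mk, hu]
    nlinarith
  have habs : ‖u‖ = 1 := by
    rw [Complex.norm_def, hns, Real.sqrt_one]
  have hne : u ≠ 0 := by
    intro h0
    rw [h0] at habs
    simp at habs
  refine ⟨Complex.arg u, ?_, ?_⟩
  · rw [Complex.cos_arg hne, habs]
    simp [hu]
  · rw [Complex.sin_arg, habs]
    simp [hu]

/-- Two points on the level set `H = E` (E > 0) have the same image under
`(τ₁, τ₂, τ₃)` iff they lie in the same `S¹`-orbit. -/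
theorem hopfMap_fibers_eq_orbits (E : ℝ) (hE : 0 < E) (x y : ℝ × ℝ × ℝ × ℝ)
    (hx : ham x = E) (hy : ham y = E) :
    hopfMap x = hopfMap y ↔ ∃ t : ℝ, Phi t x = y := by
  obtain ⟨a, b, d, e⟩ := x
  obtain ⟨a', b', d', e'⟩ := y
  simp only [ham, hopfMap, Phi, Prod.mk.injEq] at *
  constructor
  · rintro ⟨h1, h2, h3⟩
    have hr1 : a ^ 2 + b ^ 2 = a' ^ 2 + b' ^ 2 := by linarith
    have hr2 : d ^ 2 + e ^ 2 = d' ^ 2 + e' ^ 2 := by linarith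
    by_cases hab : a ^ 2 + b ^ 2 = 0
    · -- first pair is zero
      have hab' : a' ^ 2 + b' ^ 2 = 0 := by linarith
      have ha2 : a ^ 2 = 0 := le_antisymm (by linarith [sq_nonneg b]) (sq_nonneg a)
      have hb2 : b ^ 2 = 0 := le_antisymm (by linarith [sq_nonneg a]) (sq_nonneg b)
      have ha'2 : a' ^ 2 = 0 := le_antisymm (by linarith [sq_nonneg b']) (sq_nonneg a')
      have hb'2 : b' ^ 2 = 0 := le_antisymm (by linarith [sq_nonneg a']) (sq_nonneg b')
      have ha : a = 0 := pow_eq_zero_iff two_ne_zero |>.mp ha2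
      have hb : b = 0 := pow_eq_zero_iff two_ne_zero |>.mp hb2
      have ha' : a' = 0 := pow_eq_zero_iff two_ne_zero |>.mp ha'2
      have hb' : b' = 0 := pow_eq_zero_iff two_ne_zero |>.mp hb'2
      have hde : d ^ 2 + e ^ 2 ≠ 0 := by
        intro h0
        linarith
      obtain ⟨t, hc, hs⟩ := exists_angle ((d * d' + e * e') / (d ^ 2 + e ^ 2))
        ((d * e' - d' * e) / (d ^ 2 + e ^ 2)) (by
          field_simp
          linear_combination (-(d ^ 2 + e ^ 2)) * hr2)
      subst ha hb ha' hb'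
      refine ⟨t, ?_, ?_, ?_, ?_⟩ <;> rw [hc, hs]
      · ring
      · ring
      · field_simp
        ring
      · field_simp
        ring
    · obtain ⟨t, hc, hs⟩ := exists_angle ((a * a' + b * b') / (a ^ 2 + b ^ 2))
        ((a * b' - a' * b) / (a ^ 2 + b ^ 2)) (by
          field_simp
          linear_combination (-(a ^ 2 + b ^ 2)) * hr1)
      refine ⟨t, ?_, ?_, ?_, ?_⟩ <;> rw [hc, hs] <;> field_simp
      · ring
      · ring
      · linear_combination a' * h1 - b' * h3 - d' * hr1
      · linear_combination a' * h3 + b' * h1 - e' * hr1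
  · rintro ⟨t, ht1, ht2, ht3, ht4⟩
    have pyth := Real.sin_sq_add_cos_sq t
    subst ht1 ht2 ht3 ht4
    refine ⟨?_, ?_, ?_⟩
    · linear_combination (-(a * d + b * e)) * pyth
    · linear_combination (-(b ^ 2 + a ^ 2 - e ^ 2 - d ^ 2) / 2) * pyth
    · linear_combination (-(a * e - d * b)) * pyth
end
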